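/- Let p be an odd prime, G a finite abelian p-group of exponent p^n, minimally generated by d ≥ 2 elements, V = G/pG. The map sending a nonzero class [f ∪ g] in the image of the cup product H^1(G;F_p) × H^1(G;F_p) → H^2(G;F_p) (with f, g ∈ Hom(G, F_p) linearly independent) to the subgroup ker f ∩ ker g of G is a well-defined bijection from the projectivization P(im ∪) onto the set of subgroups M of G such that G/M is elementary abelian of rank 2. -/

import Mathlib

/-- The subgroup `pG` of `G`. -/
def pMul (p : ℕ) (G : Type*) [AddCommGroup G] : AddSubgroup G :=
  (AddMonoidHom.mk' (fun x : G => p • x) (fun a b => smul_add p a b)).range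

/-- Linear independence of two homomorphisms `f, g : G → F_p` over `F_p`. -/
def Indep (p : ℕ) {G : Type*} [AddCommGroup G] (f g : G →+ ZMod p) : Prop :=
  ∀ a b : ZMod p, (∀ x : G, a * f x + b * g x = 0) → a = 0 ∧ b = 0

section Helpers

variable (p : ℕ) [Fact p.Prime] {G : Type*} [AddCommGroup G]

lemma aux_val (c : ZMod p) (z : G) (φ : G →+ ZMod p) : φ (c.val • z) = c * φ z := by
  haveI : NeZero p := ⟨(Fact.out : p.Prime).ne_zero⟩
  rw [map_nsmul, nsmul_eq_mul, ZMod.natCast_val, ZMod.cast_id]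

lemma aux_surj (f g : G →+ ZMod p) (h : Indep p f g) :
    Function.Surjective (fun x : G => (f x, g x)) := by
  have key : ∀ a b : ZMod p, ¬ (a = 0 ∧ b = 0) → ∃ x, a * f x + b * g x ≠ 0 := by
    intro a b hab
    by_contra hc
    push_neg at hc
    exact hab (h a b hc)
  obtain ⟨x1, hx1⟩ := key 1 0 (by simp)
  have hfx1 : f x1 ≠ 0 := by simpa using hx1
  obtain ⟨x₀, hfx0⟩ : ∃ x₀ : G, f x₀ = 1 :=
    ⟨((f x1)⁻¹).val • x1, by rw [aux_val, inv_mul_cancel₀ hfx1]⟩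
  have hy1 : ∃ y, f y = 0 ∧ g y ≠ 0 := by
    by_contra hc
    push_neg at hc
    have hall : ∀ z : G, g x₀ * f z + (-1) * g z = 0 := by
      intro z
      have hw : f (z - (f z).val • x₀) = 0 := by
        rw [map_sub, aux_val, hfx0, mul_one, sub_self]
      have hg := hc _ hw
      rw [map_sub, aux_val] at hg
      linear_combination -hg
    have := h (g x₀) (-1) hall
    exact one_ne_zero (neg_eq_zero.mp this.2)
  obtain ⟨y1, hfy1, hgy1⟩ := hy1
  obtain ⟨y₀, hfy0, hgy0⟩ : ∃ y₀ : G, f y₀ = 0 ∧ g y₀ = 1 :=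
    ⟨((g y1)⁻¹).val • y1, by rw [aux_val, hfy1, mul_zero],
      by rw [aux_val, inv_mul_cancel₀ hgy1]⟩
  set s : ZMod p := g x₀ with hs
  rintro ⟨u, v⟩
  refine ⟨u.val • x₀ + (v - u * s).val • y₀, ?_⟩
  have h1 : f (u.val • x₀ + (v - u * s).val • y₀) = u := by
    rw [map_add, aux_val, aux_val, hfx0, hfy0, mul_one, mul_zero, add_zero]
  have h2 : g (u.val • x₀ + (v - u * s).val • y₀) = v := by
    rw [map_add, aux_val, aux_val, hgy0, mul_one, ← hs]
    ring
  simp only [h1, h2]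

lemma aux_rad_mem (f g : G →+ ZMod p) (hfg : Indep p f g) (x : G) :
    x ∈ f.ker ⊓ g.ker ↔ ∀ y : G, f x * g y - f y * g x = 0 := by
  rw [AddSubgroup.mem_inf, AddMonoidHom.mem_ker, AddMonoidHom.mem_ker]
  constructor
  · rintro ⟨h1, h2⟩ y
    rw [h1, h2, zero_mul, mul_zero, sub_zero]
  · intro hy
    have := hfg (g x) (-(f x)) (fun y => by linear_combination -(hy y))
    exact ⟨neg_eq_zero.mp this.2, this.1⟩

lemma aux_two_ne (hodd : Odd p) : (2 : ZMod p) ≠ 0 := by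
  intro h
  have : ((2 : ℕ) : ZMod p) = 0 := by exact_mod_cast h
  rw [ZMod.natCast_eq_zero_iff] at this
  have hp2 : p = 2 := ((Nat.prime_dvd_prime_iff_eq Fact.out Nat.prime_two).mp this)
  rw [hp2] at hodd
  simp [Nat.odd_iff] at hodd

end Helpers

/-- The map sending a nonzero projective class `[f ∪ g]` in the image of the cup
product `H¹ × H¹ → H²` (with `f, g` linearly independent) to `ker f ∩ ker g` is a
well-defined bijection from `P(im ∪)` onto the set of subgroups `M ≤ G` with `G/M`
elementary abelian of rank `2` (i.e. `pG ≤ M` and `|G : M| = p²`). Projective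
equality of classes `[f' ∪ g'] = λ·[f ∪ g]` is expressed as equality of cocycles up
to a coboundary. -/
theorem stmt17 (p : ℕ) [Fact p.Prime] (hodd : Odd p)
    (G : Type*) [AddCommGroup G] [Finite G]
    (hpG : ∀ g : G, ∃ k : ℕ, p ^ k • g = 0)
    (pn : ℕ) (hexp : ∀ g : G, (p ^ pn) • g = 0)
    (d : ℕ)
    (hd : IsLeast {m : ℕ | ∃ s : Finset G, s.card = m ∧ AddSubgroup.closure (↑s : Set G) = ⊤} d)
    (hd2 : 2 ≤ d) :
    (∀ f g : G →+ ZMod p, Indep p f g →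
        pMul p G ≤ f.ker ⊓ g.ker ∧ (f.ker ⊓ g.ker).index = p ^ 2) ∧
    (∀ f g f' g' : G →+ ZMod p, Indep p f g → Indep p f' g' →
        (∃ (lam : (ZMod p)ˣ) (h : G → ZMod p), ∀ x y : G,
            f' x * g' y = (lam : ZMod p) * (f x * g y) + (h y - h (x + y) + h x)) →
        f.ker ⊓ g.ker = f'.ker ⊓ g'.ker) ∧
    (∀ f g f' g' : G →+ ZMod p, Indep p f g → Indep p f' g' →
        f.ker ⊓ g.ker = f'.ker ⊓ g'.ker →
        ∃ (lam : (ZMod p)ˣ) (h : G → ZMod p), ∀ x y : G,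
          f' x * g' y = (lam : ZMod p) * (f x * g y) + (h y - h (x + y) + h x)) ∧
    (∀ M : AddSubgroup G, pMul p G ≤ M → M.index = p ^ 2 →
        ∃ f g : G →+ ZMod p, Indep p f g ∧ f.ker ⊓ g.ker = M) := by
  haveI : NeZero p := ⟨(Fact.out : p.Prime).ne_zero⟩
  refine ⟨?_, ?_, ?_, ?_⟩
  · -- Part 1
    intro f g hfg
    constructor
    · rintro x ⟨y, rfl⟩
      have hsmul : ∀ (φ : G →+ ZMod p), φ (p • y) = 0 := by
        intro φ
        rw [map_nsmul, nsmul_eq_mul, ZMod.natCast_self, zero_mul]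
      exact AddSubgroup.mem_inf.mpr ⟨AddMonoidHom.mem_ker.mpr (hsmul f),
        AddMonoidHom.mem_ker.mpr (hsmul g)⟩
    · have hsurj := aux_surj p f g hfg
      set Φ : G →+ ZMod p × ZMod p := f.prod g with hΦ
      have hker : f.ker ⊓ g.ker = Φ.ker := by
        ext x
        simp [AddSubgroup.mem_inf, AddMonoidHom.mem_ker, hΦ, AddMonoidHom.prod_apply,
          Prod.ext_iff]
      rw [hker, AddSubgroup.index_ker, AddMonoidHom.range_eq_top.mpr hsurj]
      rw [Nat.card_congr (AddSubgroup.topEquiv.toEquiv), Nat.card_prod, Nat.card_zmod, sq]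
  · -- Part 2: well-definedness
    rintro f g f' g' hfg hf'g' ⟨lam, h, H⟩
    have hω : ∀ x y : G, f' x * g' y - f' y * g' x
        = (lam : ZMod p) * (f x * g y - f y * g x) := by
      intro x y
      have h1 := H x y
      have h2 := H y x
      rw [add_comm y x] at h2
      linear_combination h1 - h2
    ext x
    rw [aux_rad_mem p f g hfg, aux_rad_mem p f' g' hf'g']
    constructor
    · intro hx y
      rw [hω, hx y, mul_zero]
    · intro hx y
      have := hω x y
      rw [hx y] at this
      rcases mul_eq_zero.mp this.symm with h0 | h0
      · exact absurd h0 lam.ne_zero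
      · exact h0
  · -- Part 3: injectivity
    intro f g f' g' hfg hf'g' hM
    obtain ⟨x₀, hx₀⟩ := aux_surj p f g hfg (1, 0)
    obtain ⟨y₀, hy₀⟩ := aux_surj p f g hfg (0, 1)
    simp only [Prod.mk.injEq] at hx₀ hy₀
    obtain ⟨hfx₀, hgx₀⟩ := hx₀
    obtain ⟨hfy₀, hgy₀⟩ := hy₀
    have hrep : ∀ (φ : G →+ ZMod p), f.ker ⊓ g.ker ≤ φ.ker →
        ∀ z : G, φ z = φ x₀ * f z + φ y₀ * g z := by
      intro φ hφ z
      have hw : z - ((f z).val • x₀ + (g z).val • y₀) ∈ f.ker ⊓ g.ker := by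
        rw [AddSubgroup.mem_inf, AddMonoidHom.mem_ker, AddMonoidHom.mem_ker]
        constructor
        · rw [map_sub, map_add, aux_val, aux_val, hfx₀, hfy₀]; ring
        · rw [map_sub, map_add, aux_val, aux_val, hgx₀, hgy₀]; ring
      have h0 : φ (z - ((f z).val • x₀ + (g z).val • y₀)) = 0 :=
        AddMonoidHom.mem_ker.mp (hφ hw)
      rw [map_sub, map_add, aux_val, aux_val, sub_eq_zero] at h0
      rw [h0]; ring
    set a := f' x₀ with ha
    set b := f' y₀ with hb
    set c := g' x₀ with hc
    set d := g' y₀ with hd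
    have hf' : ∀ z : G, f' z = a * f z + b * g z :=
      hrep f' (hM ▸ inf_le_left)
    have hg' : ∀ z : G, g' z = c * f z + d * g z :=
      hrep g' (hM ▸ inf_le_right)
    have hdet : a * d - b * c ≠ 0 := by
      intro h0
      have h1 : ∀ z : G, d * f' z + (-b) * g' z = 0 := by
        intro z; rw [hf' z, hg' z]; linear_combination f z * h0
      obtain ⟨hd0, hb0⟩ := hf'g' d (-b) h1
      have h2 : ∀ z : G, (-c) * f' z + a * g' z = 0 := by
        intro z; rw [hf' z, hg' z]; linear_combination g z * h0
      obtain ⟨hc0, ha0⟩ := hf'g' (-c) a h2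
      have hz : ∀ z : G, (1 : ZMod p) * f' z + 0 * g' z = 0 := by
        intro z
        rw [hf' z, ha0, neg_eq_zero.mp hb0]
        ring
      exact one_ne_zero (hf'g' 1 0 hz).1
    have h2ne := aux_two_ne p hodd
    have h2 : (2 : ZMod p) * (2 : ZMod p)⁻¹ = 1 := mul_inv_cancel₀ h2ne
    refine ⟨Units.mk0 (a * d - b * c) hdet,
      fun z => -(a * c * (f z * f z) + b * d * (g z * g z) + 2 * (b * c) * (f z * g z))
        * (2 : ZMod p)⁻¹, ?_⟩
    intro x y
    rw [hf' x, hg' y]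
    simp only [Units.val_mk0, map_add]
    linear_combination (-(a * c * (f x * f y) + b * d * (g x * g y)
      + b * c * (f x * g y + f y * g x))) * h2
  · -- Part 4: surjectivity
    intro M hM1 hM2
    letI m : Module (ZMod p) (G ⧸ M) :=
      QuotientAddGroup.zmodModule (fun x => hM1 ⟨x, rfl⟩)
    haveI : Finite (G ⧸ M) := inferInstance
    haveI hfin : Module.Finite (ZMod p) (G ⧸ M) := Module.Finite.of_finite
    haveI hfree : Module.Free (ZMod p) (G ⧸ M) := Module.Free.of_divisionRing (ZMod p) (G ⧸ M)
    letI : Fintype (G ⧸ M) := Fintype.ofFinite _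
    have hcard : Fintype.card (G ⧸ M) = p ^ Module.finrank (ZMod p) (G ⧸ M) := by
      have := Module.card_eq_pow_finrank (K := ZMod p) (V := G ⧸ M)
      rwa [ZMod.card] at this
    have hcard2 : Fintype.card (G ⧸ M) = p ^ 2 := by
      rw [← Nat.card_eq_fintype_card, ← hM2]
      rfl
    have hrank : Module.finrank (ZMod p) (G ⧸ M) = 2 :=
      Nat.pow_right_injective (Fact.out : p.Prime).two_le (hcard.symm.trans hcard2)
    let bV : Module.Basis (Fin 2) (ZMod p) (G ⧸ M) :=
      @Module.finBasisOfFinrankEq (ZMod p) (G ⧸ M) _ _ m hfree _ hfin 2 hrank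
    let e : (G ⧸ M) ≃ₗ[ZMod p] (Fin 2 → ZMod p) := bV.equivFun
    let A : (G ⧸ M) ≃+ (Fin 2 → ZMod p) := e.toAddEquiv
    let f : G →+ ZMod p :=
      (Pi.evalAddMonoidHom (fun _ : Fin 2 => ZMod p) 0).comp
        (A.toAddMonoidHom.comp (QuotientAddGroup.mk' M))
    let g : G →+ ZMod p :=
      (Pi.evalAddMonoidHom (fun _ : Fin 2 => ZMod p) 1).comp
        (A.toAddMonoidHom.comp (QuotientAddGroup.mk' M))
    have hfv : ∀ x : G, f x = A (QuotientAddGroup.mk' M x) 0 := fun x => rfl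
    have hgv : ∀ x : G, g x = A (QuotientAddGroup.mk' M x) 1 := fun x => rfl
    refine ⟨f, g, ?_, ?_⟩
    · intro a b hab
      have hall : ∀ w : Fin 2 → ZMod p, a * w 0 + b * w 1 = 0 := by
        intro w
        obtain ⟨v, hv⟩ := A.surjective w
        obtain ⟨x, hx⟩ := QuotientAddGroup.mk'_surjective M v
        have := hab x
        rw [hfv, hgv, hx, hv] at this
        exact this
      constructor
      · have := hall ![1, 0]; simpa using this
      · have := hall ![0, 1]; simpa using this
    · ext x
      rw [AddSubgroup.mem_inf, AddMonoidHom.mem_ker, AddMonoidHom.mem_ker, hfv, hgv]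
      constructor
      · rintro ⟨h0, h1⟩
        have he : A (QuotientAddGroup.mk' M x) = 0 := by
          funext i
          fin_cases i
          · exact h0
          · exact h1
        have h2 : (QuotientAddGroup.mk' M x) = 0 := (AddEquiv.map_eq_zero_iff A).mp he
        exact (QuotientAddGroup.eq_zero_iff x).mp h2
      · intro hx
        have h2 : (QuotientAddGroup.mk' M x) = 0 := (QuotientAddGroup.eq_zero_iff x).mpr hx
        rw [h2, map_zero]
        exact ⟨rfl, rfl⟩
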